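/- Fix a positive integer r and an arbitrary sequence of rationals u_2, u_3, .... For each positive integer j, define M_j(n) = [x^j] exp(n·r·x − Σ_{s=2}^{j} (n·u_s/s)·(−x)^s), a polynomial in n of degree j with leading coefficient r^j/j!, and define rationals a_h(r,j) for 0 ≤ h ≤ j by the expansion j!·M_j(n)/(n^j·r^j) = Σ_{h=0}^{j} a_h(r,j)·n^{−h}, so that a_0(r,j) = 1. For each natural number h, let L_h(j) denote the coefficient of t^h in the formal power series logarithm log(1 + Σ_{s=1}^{j} a_s(r,j)·t^s) over ℚ. Then for every h, there exists a polynomial q ∈ ℚ[X] of degree at most h+1 such that L_h(j) = q(j) for all positive integers j; equivalently, the coefficient of j^k in L_h(j) vanishes for all k ≥ h+2. -/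

import Mathlib

/-- Formal exponential of a power series over a `ℚ`-algebra: the `k`-th coefficient of
`expPS f` is `∑_{m = 0}^{k} (coeff k (f ^ m)) / m!`.  When the constant term of `f` is zero
(as in all our uses), the terms with `m > k` of the full exponential sum vanish, so this is
the genuine formal power-series exponential `exp f = ∑_{m ≥ 0} f ^ m / m!`. -/
noncomputable def expPS {R : Type*} [CommRing R] [Algebra ℚ R] (f : PowerSeries R) :
    PowerSeries R :=
  PowerSeries.mk fun k => ∑ m ∈ Finset.range (k + 1),
    ((m.factorial : ℚ)⁻¹) • PowerSeries.coeff (R := R) k (f ^ m)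

/-- Formal logarithm `log (1 + g)` for a power series `g` with zero constant term, defined by
`log (1 + z) = ∑_{m ≥ 1} (-1)^(m+1) z^m / m`: the `k`-th coefficient is
`∑_{m = 1}^{k} ((-1)^(m+1) / m) · coeff k (g ^ m)` (terms with `m > k` vanish when the
constant term of `g` is zero). -/
noncomputable def logOnePlus {R : Type*} [CommRing R] [Algebra ℚ R] (g : PowerSeries R) :
    PowerSeries R :=
  PowerSeries.mk fun k => ∑ m ∈ Finset.Icc 1 k,
    (((-1 : ℚ) ^ (m + 1) / (m : ℚ))) • PowerSeries.coeff (R := R) k (g ^ m)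

/-- `Mpoly r u j = [x^j] exp (n·r·x − ∑_{s=2}^{j} (n·u_s/s)·(−x)^s)`, an element of `ℚ[n]`
(the polynomial variable `n` is `Polynomial.X`), computed in the ring of formal power series
in `x` with coefficients in `ℚ[n]`.  It is a polynomial of degree `j` in `n` with leading
coefficient `r^j / j!`. -/
noncomputable def Mpoly (r : ℕ) (u : ℕ → ℚ) (j : ℕ) : Polynomial ℚ :=
  PowerSeries.coeff (R := Polynomial ℚ) j (expPS
    (PowerSeries.C (R := Polynomial ℚ) ((r : ℚ) • Polynomial.X) * PowerSeries.X -
      ∑ s ∈ Finset.Icc 2 j,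
        PowerSeries.C (R := Polynomial ℚ) ((u s / (s : ℚ)) • Polynomial.X) *
          (-PowerSeries.X) ^ s))

/-- The rationals `a_h(r, j)` defined by the expansion
`j! · M_j(n) / (n^j · r^j) = ∑_{h=0}^{j} a_h(r, j) · n^{−h}`; equivalently,
`a_h(r, j) = j! · (coefficient of n^{j−h} in M_j) / r^j` (so `a_0(r, j) = 1`). -/
noncomputable def aCoeff (r : ℕ) (u : ℕ → ℚ) (j h : ℕ) : ℚ :=
  (j.factorial : ℚ) * (Mpoly r u j).coeff (j - h) / (r : ℚ) ^ j

/-- `LCoeff r u h j` is the coefficient of `t^h` in the formal power series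
`log (1 + ∑_{s=1}^{j} a_s(r, j) · t^s)`. -/
noncomputable def LCoeff (r : ℕ) (u : ℕ → ℚ) (h j : ℕ) : ℚ :=
  PowerSeries.coeff (R := ℚ) h (logOnePlus
    (∑ s ∈ Finset.Icc 1 j, PowerSeries.C (R := ℚ) (aCoeff r u j s) * PowerSeries.X ^ s))

namespace Aux

open PowerSeries Finset

local notation "cf" => PowerSeries.coeff (R := ℚ)
local notation "D" => PowerSeries.derivativeFun (R := ℚ)
local notation "cc0" => PowerSeries.constantCoeff (R := ℚ)

lemma coeff_pow_zero {f : PowerSeries ℚ} (hf : cc0 f = 0) :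
    ∀ {m n : ℕ}, n < m → cf n (f ^ m) = 0 := by
  intro m
  induction m with
  | zero => intro n h; omega
  | succ m ih =>
    intro n h
    rw [pow_succ, coeff_mul]
    apply Finset.sum_eq_zero
    rintro ⟨a, b⟩ hab
    rw [Finset.HasAntidiagonal.mem_antidiagonal] at hab
    rcases Nat.eq_zero_or_pos b with hb | hb
    · subst hb
      simp only [coeff_zero_eq_constantCoeff, hf, mul_zero]
    · have : a < m := by omega
      rw [ih this, zero_mul]

lemma coeff_pow_mul_zero {f : PowerSeries ℚ} (hf : cc0 f = 0) (g : PowerSeries ℚ)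
    {m n : ℕ} (h : n < m) : cf n (f ^ m * g) = 0 := by
  rw [coeff_mul]
  apply Finset.sum_eq_zero
  rintro ⟨a, b⟩ hab
  rw [Finset.HasAntidiagonal.mem_antidiagonal] at hab
  have : a < m := by omega
  rw [coeff_pow_zero hf this, zero_mul]

lemma coeff_pow_self {f : PowerSeries ℚ} (hf : cc0 f = 0) (m : ℕ) :
    cf m (f ^ m) = (cf 1 f) ^ m := by
  induction m with
  | zero => simp
  | succ m ih =>
    rw [pow_succ, coeff_mul]
    rw [Finset.sum_eq_single (m, 1)]
    · rw [ih, pow_succ]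
    · rintro ⟨a, b⟩ hab hne
      rw [Finset.HasAntidiagonal.mem_antidiagonal] at hab
      rcases Nat.eq_zero_or_pos b with hb | hb
      · subst hb
        simp only [coeff_zero_eq_constantCoeff, hf, mul_zero]
      · have : a < m := by
          rcases Nat.lt_or_ge a m with h | h
          · exact h
          · exfalso; apply hne
            have : a = m := by omega
            subst this
            have : b = 1 := by omega
            subst this; rfl
        rw [coeff_pow_zero hf this, zero_mul]
    · intro hmem
      exfalso; apply hmem
      rw [Finset.HasAntidiagonal.mem_antidiagonal]

lemma derivativeFun_pow (f : PowerSeries ℚ) (m : ℕ) :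
    D (f ^ (m + 1)) = ((m + 1 : ℕ) : ℚ) • (f ^ m * D f) := by
  induction m with
  | zero => simp [derivativeFun_mul, smul_eq_mul]
  | succ m ih =>
    rw [pow_succ, derivativeFun_mul, ih]
    rw [smul_eq_mul, smul_eq_mul]
    have : ((m + 1 + 1 : ℕ) : ℚ) = ((m + 1 : ℕ) : ℚ) + 1 := by push_cast; ring
    rw [this, add_smul, one_smul, mul_smul_comm]
    rw [add_comm]
    congr 2
    rw [pow_succ]
    ring

lemma coeff_derivativeFun_Q (f : PowerSeries ℚ) (n : ℕ) :
    cf n (D f) = cf (n + 1) f * ((n : ℚ) + 1) :=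
  PowerSeries.coeff_derivative f n

end Aux

namespace Aux2
open PowerSeries Finset

local notation "cf" => PowerSeries.coeff (R := ℚ)
local notation "D" => PowerSeries.derivativeFun (R := ℚ)
local notation "cc0" => PowerSeries.constantCoeff (R := ℚ)
open Aux

lemma coeff_expPS (f : PowerSeries ℚ) (k : ℕ) :
    cf k (expPS f) = ∑ m ∈ range (k + 1), (m.factorial : ℚ)⁻¹ * cf k (f ^ m) := by
  rw [expPS, coeff_mk]
  simp [smul_eq_mul]

lemma const_expPS (f : PowerSeries ℚ) : cc0 (expPS f) = 1 := by
  rw [← coeff_zero_eq_constantCoeff_apply, coeff_expPS]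
  simp

lemma const_logOnePlus (f : PowerSeries ℚ) : cc0 (logOnePlus f) = 0 := by
  rw [← coeff_zero_eq_constantCoeff_apply, logOnePlus, coeff_mk]
  simp

lemma sum_Icc_one (t : ℕ → ℚ) (n : ℕ) :
    ∑ m ∈ Icc 1 n, t m = ∑ m ∈ range n, t (m + 1) := by
  rw [← Finset.Ico_add_one_right_eq_Icc, Finset.sum_Ico_eq_sum_range]
  simp [add_comm]

lemma coeff_logOnePlus' (f : PowerSeries ℚ) (k : ℕ) :
    cf k (logOnePlus f) = ∑ m ∈ range k, ((-1 : ℚ) ^ (m + 2) / ((m : ℚ) + 1)) * cf k (f ^ (m + 1)) := by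
  rw [logOnePlus, coeff_mk]
  rw [sum_Icc_one (fun m => ((-1 : ℚ) ^ (m + 1) / (m : ℚ)) • cf k (f ^ m)) k]
  apply sum_congr rfl
  intro m _
  rw [smul_eq_mul]
  push_cast
  ring_nf

lemma fact_succ_inv (m : ℕ) :
    (((m + 1).factorial : ℚ))⁻¹ * ((m + 1 : ℕ) : ℚ) = ((m.factorial : ℚ))⁻¹ := by
  rw [Nat.factorial_succ]
  push_cast
  rw [mul_inv]
  have h1 : ((m : ℚ) + 1) ≠ 0 := by positivity
  field_simp

lemma derivativeFun_expPS {f : PowerSeries ℚ} (hf : cc0 f = 0) :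
    D (expPS f) = D f * expPS f := by
  ext n
  have key : ∀ m : ℕ, cf n (D (f ^ (m + 1))) = ((m + 1 : ℕ) : ℚ) * cf n (f ^ m * D f) := by
    intro m
    rw [derivativeFun_pow, coeff_smul, smul_eq_mul]
  have lhs : cf n (D (expPS f)) = ∑ m ∈ range (n + 1), (m.factorial : ℚ)⁻¹ * cf n (f ^ m * D f) := by
    rw [coeff_derivativeFun_Q, coeff_expPS, Finset.sum_mul, Finset.sum_range_succ']
    have h0 : (Nat.factorial 0 : ℚ)⁻¹ * cf (n + 1) (f ^ 0) * ((n : ℚ) + 1) = 0 := by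
      simp [coeff_one]
    rw [h0, add_zero]
    apply sum_congr rfl
    intro m _
    have : (((m + 1).factorial : ℚ))⁻¹ * cf (n + 1) (f ^ (m + 1)) * ((n : ℚ) + 1)
        = (((m + 1).factorial : ℚ))⁻¹ * (cf (n + 1) (f ^ (m + 1)) * ((n : ℚ) + 1)) := by ring
    rw [this, ← coeff_derivativeFun_Q, key, ← mul_assoc, fact_succ_inv]
  rw [lhs, coeff_mul]
  have step1 : ∀ p ∈ antidiagonal n, cf p.1 (D f) * cf p.2 (expPS f)
      = ∑ m ∈ range (n + 1), (m.factorial : ℚ)⁻¹ * (cf p.1 (D f) * cf p.2 (f ^ m)) := by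
    rintro ⟨a, b⟩ hab
    rw [Finset.HasAntidiagonal.mem_antidiagonal] at hab
    rw [coeff_expPS, Finset.mul_sum]
    rw [Finset.sum_subset (Finset.range_subset_range.mpr (by omega : b + 1 ≤ n + 1))]
    · apply sum_congr rfl; intro m _; ring
    · intro m _ hm
      rw [mem_range, not_lt] at hm
      rw [coeff_pow_zero hf (by omega), mul_zero, mul_zero]
  rw [Finset.sum_congr rfl step1, Finset.sum_comm]
  apply sum_congr rfl
  intro m _
  rw [← Finset.mul_sum, ← coeff_mul, mul_comm (D f)]

lemma coeff_D_log (f : PowerSeries ℚ) (i : ℕ) :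
    cf i (D (logOnePlus f)) = ∑ m ∈ range (i + 1), (-1 : ℚ) ^ m * cf i (f ^ m * D f) := by
  have key : ∀ m : ℕ, cf i (D (f ^ (m + 1))) = ((m + 1 : ℕ) : ℚ) * cf i (f ^ m * D f) := by
    intro m
    rw [derivativeFun_pow, coeff_smul, smul_eq_mul]
  rw [coeff_derivativeFun_Q, coeff_logOnePlus', Finset.sum_mul]
  apply sum_congr rfl
  intro m _
  have : ((-1 : ℚ) ^ (m + 2) / ((m : ℚ) + 1)) * cf (i + 1) (f ^ (m + 1)) * ((i : ℚ) + 1)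
      = ((-1 : ℚ) ^ (m + 2) / ((m : ℚ) + 1)) * (cf (i + 1) (f ^ (m + 1)) * ((i : ℚ) + 1)) := by
    ring
  rw [this, ← coeff_derivativeFun_Q, key]
  have hm1 : ((m : ℚ) + 1) ≠ 0 := by positivity
  have : ((-1 : ℚ) ^ (m + 2)) = (-1 : ℚ) ^ m := by
    rw [pow_add]; ring
  rw [this]
  push_cast
  field_simp

lemma derivativeFun_logOnePlus {f : PowerSeries ℚ} (hf : cc0 f = 0) :
    D (logOnePlus f) * (1 + f) = D f := by
  ext n
  rw [mul_add, mul_one, map_add, coeff_mul]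
  have h2 : ∑ p ∈ antidiagonal n, cf p.1 (D (logOnePlus f)) * cf p.2 f
      = ∑ m ∈ range (n + 1), (-1 : ℚ) ^ m * cf n (f ^ (m + 1) * D f) := by
    have step1 : ∀ p ∈ antidiagonal n, cf p.1 (D (logOnePlus f)) * cf p.2 f
        = ∑ m ∈ range (n + 1), (-1 : ℚ) ^ m * (cf p.1 (f ^ m * D f) * cf p.2 f) := by
      rintro ⟨a, b⟩ hab
      rw [Finset.HasAntidiagonal.mem_antidiagonal] at hab
      rw [coeff_D_log, Finset.sum_mul]
      rw [Finset.sum_subset (Finset.range_subset_range.mpr (by omega : a + 1 ≤ n + 1))]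
      · apply sum_congr rfl; intro m _; ring
      · intro m _ hm
        rw [mem_range, not_lt] at hm
        rw [coeff_pow_mul_zero hf _ (by omega), mul_zero, zero_mul]
    rw [Finset.sum_congr rfl step1, Finset.sum_comm]
    apply sum_congr rfl
    intro m _
    rw [← Finset.mul_sum, ← coeff_mul]
    congr 1
    rw [pow_succ]
    ring
  rw [coeff_D_log, h2]
  set c : ℕ → ℚ := fun m => cf n (f ^ m * D f) with hc
  have hcz : c (n + 1) = 0 := coeff_pow_mul_zero hf _ (Nat.lt_succ_self n)
  have e1 : ∑ m ∈ range (n + 1), (-1 : ℚ) ^ m * c m = ∑ m ∈ range (n + 2), (-1 : ℚ) ^ m * c m := by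
    rw [Finset.sum_range_succ (fun m => (-1 : ℚ) ^ m * c m) (n + 1), hcz, mul_zero, add_zero]
  have e2 : ∑ m ∈ range (n + 1), (-1 : ℚ) ^ m * c (m + 1)
      = c 0 - ∑ m ∈ range (n + 2), (-1 : ℚ) ^ m * c m := by
    rw [Finset.sum_range_succ' (fun m => (-1 : ℚ) ^ m * c m) (n + 1)]
    have : ∀ m ∈ range (n + 1), (-1 : ℚ) ^ (m + 1) * c (m + 1) = -((-1) ^ m * c (m + 1)) := by
      intro m _; ring
    rw [Finset.sum_congr rfl this, Finset.sum_neg_distrib]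
    simp
  rw [e1, e2]
  have : c 0 = cf n (D f) := by rw [hc]; simp
  rw [← this]
  ring

lemma ode_unique {a y z : PowerSeries ℚ} (hy : D y = a * y) (hz : D z = a * z)
    (h0 : cc0 y = cc0 z) : y = z := by
  ext n
  induction n using Nat.strong_induction_on with
  | _ n ih =>
    match n with
    | 0 =>
      rw [coeff_zero_eq_constantCoeff_apply, coeff_zero_eq_constantCoeff_apply]
      exact h0
    | (n + 1) =>
      have hy' := congrArg (cf n) hy
      have hz' := congrArg (cf n) hz
      rw [coeff_derivativeFun_Q, coeff_mul] at hy' hz'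
      have hsum : ∑ p ∈ antidiagonal n, cf p.1 a * cf p.2 y
          = ∑ p ∈ antidiagonal n, cf p.1 a * cf p.2 z := by
        apply sum_congr rfl
        rintro ⟨i, k⟩ hik
        rw [Finset.HasAntidiagonal.mem_antidiagonal] at hik
        rw [ih k (by omega)]
      have hn : ((n : ℚ) + 1) ≠ 0 := by positivity
      exact mul_right_cancel₀ hn (hy'.trans (hsum.trans hz'.symm))

lemma expPS_add {f g : PowerSeries ℚ} (hf : cc0 f = 0) (hg : cc0 g = 0) :
    expPS (f + g) = expPS f * expPS g := by
  apply ode_unique (a := D f + D g)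
  · rw [derivativeFun_expPS (by rw [map_add, hf, hg, add_zero]), derivativeFun_add]
  · rw [derivativeFun_mul, derivativeFun_expPS hf, derivativeFun_expPS hg,
      smul_eq_mul, smul_eq_mul]
    ring
  · rw [const_expPS, map_mul, const_expPS, const_expPS, mul_one]

lemma expPS_logOnePlus {f : PowerSeries ℚ} (hf : cc0 f = 0) :
    expPS (logOnePlus f) = 1 + f := by
  apply ode_unique (a := D (logOnePlus f))
  · exact derivativeFun_expPS (const_logOnePlus f)
  · have : D (1 + f) = D f := by
      rw [derivativeFun_add, derivativeFun_one, zero_add]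
    rw [this, ← derivativeFun_logOnePlus hf, mul_comm]
  · rw [const_expPS, map_add, map_one, hf, add_zero]

end Aux2
namespace Aux3
open PowerSeries Finset
open Aux Aux2

local notation "cf" => PowerSeries.coeff (R := ℚ)
local notation "D" => PowerSeries.derivativeFun (R := ℚ)
local notation "cc0" => PowerSeries.constantCoeff (R := ℚ)

variable (r : ℕ) (u : ℕ → ℚ)

noncomputable def gQ : PowerSeries ℚ :=
  PowerSeries.mk fun k => if k = 0 then 0 else if k = 1 then (r : ℚ) else (-1) ^ (k + 1) * u k / k

noncomputable def gtr (j : ℕ) : PowerSeries ℚ :=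
  PowerSeries.C (R := ℚ) (r : ℚ) * PowerSeries.X -
    ∑ s ∈ Icc 2 j, PowerSeries.C (R := ℚ) (u s / s) * (-PowerSeries.X) ^ s

noncomputable def gg : PowerSeries ℚ := rescale ((r : ℚ)⁻¹) (gQ r u)

noncomputable def W (j m : ℕ) : ℚ := cf j (gg r u ^ m)

noncomputable def ccoef (d : ℕ) : ℚ := cf (d + 1) (gg r u)

noncomputable def Fq (j : ℕ) : PowerSeries ℚ :=
  ∑ s ∈ range (j + 1),
    PowerSeries.C (R := ℚ) ((j.factorial : ℚ) / ((j - s).factorial : ℚ) * W r u j (j - s)) *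
      PowerSeries.X ^ s

noncomputable def Kq (j : ℕ) : PowerSeries ℚ := logOnePlus (Fq r u j - 1)

noncomputable def Lq (h j : ℕ) : ℚ := cf h (Kq r u j)

lemma const_gQ : cc0 (gQ r u) = 0 := by
  rw [← coeff_zero_eq_constantCoeff_apply, gQ, coeff_mk]
  simp

lemma const_gg : cc0 (gg r u) = 0 := by
  rw [← coeff_zero_eq_constantCoeff_apply, gg, coeff_rescale,
    coeff_zero_eq_constantCoeff_apply, const_gQ, mul_zero]

lemma coeff_gtr {k j : ℕ} (hk : k ≤ j) : cf k (gtr r u j) = cf k (gQ r u) := by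
  have hneg : ∀ s : ℕ, ((-PowerSeries.X : PowerSeries ℚ)) ^ s
      = PowerSeries.C (R := ℚ) ((-1 : ℚ) ^ s) * PowerSeries.X ^ s := by
    intro s
    have h1 : (-1 : PowerSeries ℚ) = PowerSeries.C (R := ℚ) (-1) := by simp
    rw [neg_pow, h1, ← map_pow]
  have hterm : ∀ s k : ℕ, cf k (PowerSeries.C (R := ℚ) (u s / s) * (-PowerSeries.X) ^ s)
      = (u s / s) * ((-1 : ℚ) ^ s * (if k = s then 1 else 0)) := by
    intro s k
    rw [hneg, ← mul_assoc, ← map_mul, coeff_C_mul, coeff_X_pow, mul_assoc]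
  rw [gtr, map_sub, map_sum, coeff_C_mul, coeff_X, gQ, coeff_mk,
    Finset.sum_congr rfl (fun s _ => hterm s k)]
  by_cases hk0 : k = 0
  · subst hk0
    rw [Finset.sum_eq_zero (fun s hs => by
      rw [mem_Icc] at hs
      rw [if_neg (by omega), mul_zero, mul_zero])]
    simp
  · by_cases hk1 : k = 1
    · subst hk1
      rw [Finset.sum_eq_zero (fun s hs => by
        rw [mem_Icc] at hs
        rw [if_neg (by omega), mul_zero, mul_zero])]
      simp
    · rw [if_neg hk1, mul_zero, if_neg hk0, if_neg hk1]
      rw [Finset.sum_eq_single k]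
      · rw [if_pos rfl, mul_one]
        ring
      · intro s _ hne
        rw [if_neg (fun h => hne h.symm), mul_zero, mul_zero]
      · intro hk'
        exact absurd (Finset.mem_Icc.mpr ⟨by omega, hk⟩) hk'

lemma const_gtr (j : ℕ) : cc0 (gtr r u j) = 0 := by
  rw [← coeff_zero_eq_constantCoeff_apply, coeff_gtr r u (Nat.zero_le j),
    coeff_zero_eq_constantCoeff_apply, const_gQ]

lemma agree_pow {f g : PowerSeries ℚ} (hf : cc0 f = 0) (hg : cc0 g = 0) {K : ℕ}
    (h : ∀ k ≤ K, cf k f = cf k g) :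
    ∀ (m : ℕ) {n : ℕ}, n + 1 ≤ K + m → cf n (f ^ m) = cf n (g ^ m) := by
  intro m
  induction m with
  | zero => intro n _; rfl
  | succ m ih =>
    intro n hn
    rw [pow_succ, pow_succ, coeff_mul, coeff_mul]
    apply Finset.sum_congr rfl
    rintro ⟨a, b⟩ hab
    rw [Finset.HasAntidiagonal.mem_antidiagonal] at hab
    rcases Nat.eq_zero_or_pos b with hb | hb
    · subst hb
      simp only [coeff_zero_eq_constantCoeff_apply, hf, hg, mul_zero]
    · rcases Nat.lt_or_ge a m with ha | ha
      · rw [coeff_pow_zero hf ha, coeff_pow_zero hg ha, zero_mul, zero_mul]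
      · have h1 : a + 1 ≤ K + m := by omega
        have h2 : b ≤ K := by omega
        rw [ih h1, h b h2]

lemma coeff_gg_pow (hr : 0 < r) (j m : ℕ) : cf j ((gQ r u) ^ m) = (r : ℚ) ^ j * W r u j m := by
  have h : ((r : ℚ)) ≠ 0 := Nat.cast_ne_zero.mpr (by omega)
  have hgg : (gg r u) ^ m = rescale ((r : ℚ)⁻¹) ((gQ r u) ^ m) := by
    rw [gg, ← map_pow]
  rw [W, hgg, coeff_rescale, ← mul_assoc, inv_pow]
  rw [mul_inv_cancel₀ (pow_ne_zero _ h), one_mul]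

lemma coeff_one_gg (hr : 0 < r) : cf 1 (gg r u) = 1 := by
  rw [gg, coeff_rescale, pow_one, gQ, coeff_mk]
  have h : ((r : ℚ)) ≠ 0 := Nat.cast_ne_zero.mpr (by omega)
  simp [h]

lemma W_diag (hr : 0 < r) (j : ℕ) : W r u j j = 1 := by
  rw [W, coeff_pow_self (const_gg r u), coeff_one_gg r u hr, one_pow]

lemma coeff_Fq (j s : ℕ) : cf s (Fq r u j)
    = if s ≤ j then (j.factorial : ℚ) / ((j - s).factorial : ℚ) * W r u j (j - s) else 0 := by
  rw [Fq, map_sum]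
  have hterm : ∀ s' s : ℕ, cf s (PowerSeries.C (R := ℚ) ((j.factorial : ℚ) / ((j - s').factorial : ℚ)
      * W r u j (j - s')) * PowerSeries.X ^ s')
      = ((j.factorial : ℚ) / ((j - s').factorial : ℚ) * W r u j (j - s'))
        * (if s = s' then 1 else 0) := by
    intro s' s
    rw [coeff_C_mul, coeff_X_pow]
  by_cases hs : s ≤ j
  · rw [if_pos hs, Finset.sum_eq_single s]
    · rw [hterm, if_pos rfl, mul_one]
    · intro s' _ hne
      rw [hterm, if_neg (fun h => hne h.symm), mul_zero]
    · intro hmem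
      exfalso; apply hmem; rw [mem_range]; omega
  · rw [if_neg hs, Finset.sum_eq_zero]
    intro s' hs'
    rw [mem_range] at hs'
    rw [hterm, if_neg (by omega), mul_zero]

lemma const_Fq (hr : 0 < r) (j : ℕ) : cc0 (Fq r u j) = 1 := by
  rw [← coeff_zero_eq_constantCoeff_apply, coeff_Fq, if_pos (Nat.zero_le j)]
  simp only [Nat.sub_zero, W_diag r u hr, mul_one]
  rw [div_self]
  exact_mod_cast Nat.factorial_ne_zero j

lemma const_Fq_sub_one (hr : 0 < r) (j : ℕ) : cc0 (Fq r u j - 1) = 0 := by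
  rw [map_sub, const_Fq r u hr, map_one, sub_self]


lemma Mpoly_arg (j : ℕ) :
    (PowerSeries.C (R := Polynomial ℚ) ((r : ℚ) • Polynomial.X) * PowerSeries.X -
      ∑ s ∈ Finset.Icc 2 j,
        PowerSeries.C (R := Polynomial ℚ) ((u s / (s : ℚ)) • Polynomial.X) * (-PowerSeries.X) ^ s)
    = PowerSeries.C (R := Polynomial ℚ) Polynomial.X *
        PowerSeries.map (Polynomial.C (R := ℚ)) (gtr r u j) := by
  rw [gtr, map_sub, mul_sub]
  refine congrArg₂ (· - ·) ?_ ?_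
  · rw [map_mul, PowerSeries.map_C, PowerSeries.map_X, ← mul_assoc, ← map_mul,
      mul_comm Polynomial.X, ← Polynomial.smul_eq_C_mul]
  · rw [map_sum, Finset.mul_sum]
    apply Finset.sum_congr rfl
    intro s _
    rw [map_mul, PowerSeries.map_C, map_pow, map_neg, PowerSeries.map_X, ← mul_assoc,
      ← map_mul, mul_comm Polynomial.X, ← Polynomial.smul_eq_C_mul]

lemma Mpoly_expand (j : ℕ) : Mpoly r u j = ∑ m ∈ range (j + 1),
    ((m.factorial : ℚ)⁻¹) • (Polynomial.X ^ m * Polynomial.C (cf j ((gtr r u j) ^ m))) := by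
  rw [Mpoly, Mpoly_arg, expPS, coeff_mk]
  apply Finset.sum_congr rfl
  intro m _
  congr 1
  rw [mul_pow, ← map_pow, ← map_pow, coeff_C_mul, coeff_map]

lemma Mpoly_coeff (j s : ℕ) : (Mpoly r u j).coeff (j - s)
    = (((j - s).factorial : ℚ))⁻¹ * cf j ((gtr r u j) ^ (j - s)) := by
  rw [Mpoly_expand, Polynomial.finset_sum_coeff]
  have hterm : ∀ m : ℕ, ((m.factorial : ℚ)⁻¹ •
      (Polynomial.X ^ m * Polynomial.C (cf j ((gtr r u j) ^ m)))).coeff (j - s)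
      = (m.factorial : ℚ)⁻¹ * (cf j ((gtr r u j) ^ m) * (if j - s = m then 1 else 0)) := by
    intro m
    rw [Polynomial.coeff_smul, mul_comm (Polynomial.X ^ m), Polynomial.coeff_C_mul,
      Polynomial.coeff_X_pow, smul_eq_mul]
  rw [Finset.sum_congr rfl (fun m _ => hterm m), Finset.sum_eq_single (j - s)]
  · rw [if_pos rfl, mul_one]
  · intro m _ hne
    rw [if_neg (fun h => hne h.symm), mul_zero, mul_zero]
  · intro hmem
    exact absurd (Finset.mem_range.mpr (by omega)) hmem

lemma aCoeff_eq (hr : 0 < r) {j s : ℕ} (hsj : s ≤ j) :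
    aCoeff r u j s = (j.factorial : ℚ) / (((j - s).factorial : ℚ)) * W r u j (j - s) := by
  have hgQ : cf j ((gtr r u j) ^ (j - s)) = cf j ((gQ r u) ^ (j - s)) := by
    rcases eq_or_lt_of_le hsj with h | h
    · subst h; rw [Nat.sub_self, pow_zero, pow_zero]
    · exact agree_pow (const_gtr r u j) (const_gQ r u)
        (fun k hk => coeff_gtr r u hk) (j - s) (by omega)
  have hrq : ((r : ℚ)) ^ j ≠ 0 := pow_ne_zero _ (Nat.cast_ne_zero.mpr (by omega))
  have hfac : (((j - s).factorial : ℚ)) ≠ 0 := Nat.cast_ne_zero.mpr (Nat.factorial_ne_zero _)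
  rw [aCoeff, Mpoly_coeff, hgQ, coeff_gg_pow r u hr]
  field_simp

lemma main1 (hr : 0 < r) {j : ℕ} (hj : 1 ≤ j) :
    Fq r u j - 1 = ∑ s ∈ Icc 1 j, PowerSeries.C (R := ℚ) (aCoeff r u j s) * PowerSeries.X ^ s := by
  ext k
  rw [map_sub, map_sum, coeff_one, coeff_Fq]
  have hterm : ∀ s : ℕ, cf k (PowerSeries.C (R := ℚ) (aCoeff r u j s) * PowerSeries.X ^ s)
      = aCoeff r u j s * (if k = s then 1 else 0) := by
    intro s
    rw [coeff_C_mul, coeff_X_pow]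
  rw [Finset.sum_congr rfl (fun s _ => hterm s)]
  by_cases hk0 : k = 0
  · subst hk0
    rw [if_pos rfl, if_pos (Nat.zero_le j), Nat.sub_zero, W_diag r u hr,
      mul_one, div_self (Nat.cast_ne_zero.mpr (Nat.factorial_ne_zero j)), sub_self]
    rw [Finset.sum_eq_zero]
    intro s hs
    rw [mem_Icc] at hs
    rw [if_neg (by omega), mul_zero]
  · rw [if_neg hk0, sub_zero]
    by_cases hkj : k ≤ j
    · rw [if_pos hkj, Finset.sum_eq_single k]
      · rw [if_pos rfl, mul_one, aCoeff_eq r u hr hkj]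
      · intro s _ hne
        rw [if_neg (fun h => hne h.symm), mul_zero]
      · intro hmem
        exact absurd (Finset.mem_Icc.mpr (by omega)) hmem
    · rw [if_neg hkj, Finset.sum_eq_zero]
      intro s hs
      rw [mem_Icc] at hs
      rw [if_neg (by omega), mul_zero]

lemma LCoeff_eq_Lq (hr : 0 < r) {j : ℕ} (hj : 1 ≤ j) (h : ℕ) :
    LCoeff r u h j = Lq r u h j := by
  rw [LCoeff, Lq, Kq, main1 r u hr hj]


noncomputable def hhs : PowerSeries ℚ := PowerSeries.X * D (gg r u) - gg r u

lemma coeff_X_mul_D (f : PowerSeries ℚ) (j : ℕ) :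
    cf j (PowerSeries.X * D f) = (j : ℚ) * cf j f := by
  cases j with
  | zero =>
    rw [← pow_one (PowerSeries.X : PowerSeries ℚ), coeff_X_pow_mul']
    simp
  | succ i =>
    rw [coeff_succ_X_mul, coeff_derivativeFun_Q]
    push_cast
    ring

lemma coeff_hhs (i : ℕ) : cf i (hhs r u) = ((i : ℚ) - 1) * cf i (gg r u) := by
  rw [hhs, map_sub, coeff_X_mul_D]
  ring

lemma lemW (m j : ℕ) :
    ((j : ℚ) - ((m : ℚ) + 1)) * W r u j (m + 1)
      = ((m : ℚ) + 1) * ∑ d ∈ range j, (d : ℚ) * ccoef r u d * W r u (j - 1 - d) m := by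
  have s1 : PowerSeries.X * D ((gg r u) ^ (m + 1)) - ((m + 1 : ℕ) : ℚ) • (gg r u) ^ (m + 1)
      = ((m + 1 : ℕ) : ℚ) • (hhs r u * (gg r u) ^ m) := by
    rw [derivativeFun_pow, hhs, mul_smul_comm, ← smul_sub]
    congr 1
    rw [pow_succ]
    ring
  have s2 := congrArg (cf j) s1
  rw [map_sub, coeff_smul, coeff_smul, smul_eq_mul, smul_eq_mul, coeff_X_mul_D] at s2
  have s3 : cf j (hhs r u * (gg r u) ^ m)
      = ∑ d ∈ range j, (d : ℚ) * ccoef r u d * W r u (j - 1 - d) m := by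
    rw [coeff_mul, Finset.Nat.sum_antidiagonal_eq_sum_range_succ_mk, Finset.sum_range_succ']
    have h0 : cf 0 (hhs r u) * cf (j - 0) ((gg r u) ^ m) = 0 := by
      rw [coeff_hhs]
      have : cf 0 (gg r u) = 0 := by
        rw [coeff_zero_eq_constantCoeff_apply, const_gg]
      rw [this]
      ring
    rw [h0, add_zero]
    apply Finset.sum_congr rfl
    intro d _
    rw [coeff_hhs]
    have hidx : j - (d + 1) = j - 1 - d := by omega
    rw [hidx]
    rw [W, ccoef]
    push_cast
    ring
  rw [s3] at s2
  have hc : ((m + 1 : ℕ) : ℚ) = (m : ℚ) + 1 := by push_cast; ring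
  rw [hc] at s2
  simp only [W] at s2 ⊢
  linarith

noncomputable def ffq (j k : ℕ) : ℚ := ∏ i ∈ range k, ((j : ℚ) - (i : ℚ))

lemma ffq_zero {j d : ℕ} (hd : j ≤ d) : ffq j (d + 1) = 0 := by
  apply Finset.prod_eq_zero (Finset.mem_range.mpr (by omega : j < d + 1))
  rw [sub_self]

lemma ffq_fact : ∀ {k j : ℕ}, k ≤ j → ffq j k * (((j - k).factorial : ℚ)) = (j.factorial : ℚ) := by
  intro k
  induction k with
  | zero => intro j _; simp [ffq]
  | succ k ih =>
    intro j hk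
    have hk' : k ≤ j := by omega
    have e1 : ((j : ℚ) - (k : ℚ)) = ((j - k : ℕ) : ℚ) := by
      rw [Nat.cast_sub hk']
    have e2 : (j - k) = (j - (k + 1)) + 1 := by omega
    calc ffq j (k + 1) * (((j - (k + 1)).factorial : ℚ))
        = ffq j k * (((j - k : ℕ) : ℚ) * ((j - (k + 1)).factorial : ℚ)) := by
          rw [ffq, Finset.prod_range_succ, ← ffq, e1]; ring
      _ = ffq j k * (((j - k).factorial : ℚ)) := by
          rw [e2, Nat.factorial_succ]; push_cast; ring
      _ = (j.factorial : ℚ) := ih hk'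

lemma sum_range_ext {G : ℕ → ℚ} {A B : ℕ} (hAB : A ≤ B)
    (hz : ∀ d, A ≤ d → d < B → G d = 0) :
    ∑ d ∈ range A, G d = ∑ d ∈ range B, G d := by
  apply Finset.sum_subset (Finset.range_subset_range.mpr hAB)
  intro x hx hnx
  rw [mem_range] at hx hnx
  exact hz x (by omega) hx

lemma final2 (hr : 0 < r) (h j : ℕ) (hh1 : 1 ≤ h) :
    (h : ℚ) * cf h (Fq r u j) = ∑ d ∈ range (h + 1),
      (d : ℚ) * ccoef r u d * ffq j (d + 1) * cf (h - d) (Fq r u (j - 1 - d)) := by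
  by_cases hcase : h ≤ j
  · by_cases hje : h = j
    · subst hje
      have hW : W r u h 0 = 0 := by
        rw [W, pow_zero, coeff_one, if_neg (by omega)]
      rw [coeff_Fq, if_pos le_rfl, Nat.sub_self, hW, mul_zero, mul_zero]
      rw [eq_comm]
      apply Finset.sum_eq_zero
      intro d hd
      rw [mem_range] at hd
      by_cases hdj : h ≤ d
      · rw [ffq_zero hdj]; ring
      · rw [coeff_Fq, if_neg (by omega)]; ring
    · have hlt : h < j := by omega
      set m1 := j - h - 1 with hm1
      have hm11 : m1 + 1 = j - h := by omega
      have key := lemW r u m1 j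
      rw [hm11] at key
      have hc1 : ((j : ℚ) - ((m1 : ℚ) + 1)) = (h : ℚ) := by
        have hn : (m1 + 1 + h : ℕ) = j := by omega
        have hq := congrArg (fun n : ℕ => (n : ℚ)) hn
        push_cast at hq
        linarith
      have key2 : (h : ℚ) * W r u j (j - h)
          = ((m1 : ℚ) + 1) * ∑ d ∈ range j, (d : ℚ) * ccoef r u d * W r u (j - 1 - d) m1 := by
        rw [← hc1]; exact key
      have hfac : ((j.factorial : ℚ)) / (((j - h).factorial : ℚ)) * ((m1 : ℚ) + 1)
          = (j.factorial : ℚ) / ((m1.factorial : ℚ)) := by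
        have e2 : (j - h) = m1 + 1 := by omega
        rw [e2, Nat.factorial_succ]
        have h1 : ((m1 : ℚ) + 1) ≠ 0 := by positivity
        have h2 : ((m1.factorial : ℚ)) ≠ 0 := Nat.cast_ne_zero.mpr (Nat.factorial_ne_zero _)
        push_cast
        field_simp
      have lhs_eq : (h : ℚ) * cf h (Fq r u j)
          = ∑ d ∈ range j, (j.factorial : ℚ) / ((m1.factorial : ℚ)) *
            ((d : ℚ) * ccoef r u d * W r u (j - 1 - d) m1) := by
        rw [coeff_Fq, if_pos hcase, ← Finset.mul_sum]
        calc (h : ℚ) * ((j.factorial : ℚ) / (((j - h).factorial : ℚ)) * W r u j (j - h))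
            = (j.factorial : ℚ) / (((j - h).factorial : ℚ)) * ((h : ℚ) * W r u j (j - h)) := by
              ring
          _ = (j.factorial : ℚ) / (((j - h).factorial : ℚ)) * (((m1 : ℚ) + 1) *
              ∑ d ∈ range j, (d : ℚ) * ccoef r u d * W r u (j - 1 - d) m1) := by rw [key2]
          _ = _ := by rw [← mul_assoc, hfac]
      have ext1 : ∑ d ∈ range (h + 1), (j.factorial : ℚ) / ((m1.factorial : ℚ)) *
            ((d : ℚ) * ccoef r u d * W r u (j - 1 - d) m1)
          = ∑ d ∈ range j, (j.factorial : ℚ) / ((m1.factorial : ℚ)) *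
            ((d : ℚ) * ccoef r u d * W r u (j - 1 - d) m1) := by
        apply sum_range_ext (by omega : h + 1 ≤ j)
        intro d hd1 hd2
        have hzz : W r u (j - 1 - d) m1 = 0 := by
          apply coeff_pow_zero (const_gg r u)
          omega
        rw [hzz]; ring
      rw [lhs_eq, ← ext1]
      apply Finset.sum_congr rfl
      intro d hd
      rw [mem_range] at hd
      by_cases hd0 : d = 0
      · subst hd0; push_cast; ring
      · rw [coeff_Fq, if_pos (by omega : h - d ≤ j - 1 - d)]
        have hidx : (j - 1 - d) - (h - d) = m1 := by omega
        rw [hidx]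
        have hffq : ffq j (d + 1) * (((j - 1 - d).factorial : ℚ)) = (j.factorial : ℚ) := by
          have h5 := ffq_fact (j := j) (k := d + 1) (by omega)
          have hidx2 : j - (d + 1) = j - 1 - d := by omega
          rwa [hidx2] at h5
        have hden : (((j - 1 - d).factorial : ℚ)) ≠ 0 :=
          Nat.cast_ne_zero.mpr (Nat.factorial_ne_zero _)
        have hden2 : ((m1.factorial : ℚ)) ≠ 0 :=
          Nat.cast_ne_zero.mpr (Nat.factorial_ne_zero _)
        rw [← hffq]
        field_simp
  · rw [coeff_Fq, if_neg hcase, mul_zero, eq_comm]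
    apply Finset.sum_eq_zero
    intro d hd
    rw [mem_range] at hd
    by_cases hdj : j ≤ d
    · rw [ffq_zero hdj]; ring
    · rw [coeff_Fq, if_neg (by omega)]; ring

lemma sum_if_glue (c ψ : ℕ → ℚ) (e B : ℕ) (hc : ∀ d, B ≤ d → c d = 0) :
    ∑ d ∈ range B, c d * (if d ≤ e then ψ d else 0)
      = ∑ d ∈ range (e + 1), c d * ψ d := by
  trans (∑ d ∈ range (B + e + 1), c d * (if d ≤ e then ψ d else 0))
  · exact sum_range_ext (by omega) (fun d h1 _ => by rw [hc d h1, zero_mul])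
  · trans (∑ d ∈ range (e + 1), c d * (if d ≤ e then ψ d else 0))
    · exact (sum_range_ext (by omega) (fun d h1 _ => by rw [if_neg (by omega), mul_zero])).symm
    · apply Finset.sum_congr rfl
      intro d hd
      rw [mem_range] at hd
      rw [if_pos (by omega)]

lemma s2 (hr : 0 < r) (j : ℕ) : D (Fq r u j) = ∑ d ∈ range j,
    ((d : ℚ) * ccoef r u d * ffq j (d + 1)) •
      (PowerSeries.X ^ (d - 1) * Fq r u (j - 1 - d)) := by
  ext h
  rw [coeff_derivativeFun_Q, map_sum]
  have rhs_eq : ∀ d ∈ range j, cf h (((d : ℚ) * ccoef r u d * ffq j (d + 1)) •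
      (PowerSeries.X ^ (d - 1) * Fq r u (j - 1 - d)))
      = ((d : ℚ) * ccoef r u d * ffq j (d + 1)) *
        (if d ≤ h + 1 then cf (h + 1 - d) (Fq r u (j - 1 - d)) else 0) := by
    intro d _
    rw [coeff_smul, smul_eq_mul, coeff_X_pow_mul']
    by_cases hd0 : d = 0
    · subst hd0
      rw [Nat.cast_zero, zero_mul, zero_mul, zero_mul, zero_mul]
    · by_cases hdh : d ≤ h + 1
      · rw [if_pos (by omega : d - 1 ≤ h), if_pos hdh]
        have hix : h - (d - 1) = h + 1 - d := by omega
        rw [hix]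
      · rw [if_neg (by omega), if_neg hdh]
  rw [Finset.sum_congr rfl rhs_eq]
  rw [sum_if_glue _ _ (h + 1) j (fun d hd => by rw [ffq_zero (by omega : j ≤ d)]; ring)]
  have f2 := final2 r u hr (h + 1) j (by omega)
  have hcast : (((h + 1 : ℕ)) : ℚ) = (h : ℚ) + 1 := by push_cast; ring
  rw [hcast] at f2
  rw [mul_comm, f2]

lemma Fq_ne_zero (hr : 0 < r) (j : ℕ) : Fq r u j ≠ 0 := by
  intro hF
  have := const_Fq r u hr j
  rw [hF, map_zero] at this
  exact one_ne_zero this.symm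

lemma const_Kq (j : ℕ) : cc0 (Kq r u j) = 0 := const_logOnePlus _

lemma expPS_Kq (hr : 0 < r) (j : ℕ) : expPS (Kq r u j) = Fq r u j := by
  rw [Kq, expPS_logOnePlus (const_Fq_sub_one r u hr j), add_sub_cancel]

lemma ratio_eq (hr : 0 < r) (a j : ℕ) :
    expPS (Kq r u a - Kq r u j) * Fq r u j = Fq r u a := by
  have hδ : cc0 (Kq r u a - Kq r u j) = 0 := by
    rw [map_sub, const_Kq, const_Kq, sub_zero]
  have h2 := expPS_add hδ (const_Kq r u j)
  rw [sub_add_cancel] at h2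
  rw [← expPS_Kq r u hr j, ← h2, expPS_Kq r u hr a]

lemma dK_eq (hr : 0 < r) (j : ℕ) : D (Kq r u j) = ∑ d ∈ range j,
    ((d : ℚ) * ccoef r u d * ffq j (d + 1)) •
      (PowerSeries.X ^ (d - 1) * expPS (Kq r u (j - 1 - d) - Kq r u j)) := by
  have hDsub : D (Fq r u j - 1) = D (Fq r u j) := by
    ext n
    rw [coeff_derivativeFun_Q, coeff_derivativeFun_Q, map_sub, coeff_one,
      if_neg (by omega : ¬n + 1 = 0), sub_zero]
  have hlog : D (Kq r u j) * Fq r u j = D (Fq r u j) := by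
    have := derivativeFun_logOnePlus (const_Fq_sub_one r u hr j)
    rw [hDsub, add_sub_cancel] at this
    rw [Kq]
    exact this
  have hs2' : D (Fq r u j) = (∑ d ∈ range j,
      ((d : ℚ) * ccoef r u d * ffq j (d + 1)) •
        (PowerSeries.X ^ (d - 1) * expPS (Kq r u (j - 1 - d) - Kq r u j))) * Fq r u j := by
    rw [s2 r u hr j, Finset.sum_mul]
    apply Finset.sum_congr rfl
    intro d _
    rw [smul_mul_assoc, mul_assoc (PowerSeries.X ^ (d - 1)), ratio_eq r u hr]
  apply mul_right_cancel₀ (Fq_ne_zero r u hr j)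
  rw [hlog, hs2']

lemma rq (hr : 0 < r) (h j : ℕ) (hh1 : 1 ≤ h) :
    (h : ℚ) * Lq r u h j = ∑ d ∈ range (h + 1),
      (d : ℚ) * ccoef r u d * ffq j (d + 1)
        * cf (h - d) (expPS (Kq r u (j - 1 - d) - Kq r u j)) := by
  have hd := congrArg (cf (h - 1)) (dK_eq r u hr j)
  rw [coeff_derivativeFun_Q, map_sum] at hd
  have hidx : h - 1 + 1 = h := by omega
  rw [hidx] at hd
  have hterm : ∀ d ∈ range j, cf (h - 1) (((d : ℚ) * ccoef r u d * ffq j (d + 1)) •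
      (PowerSeries.X ^ (d - 1) * expPS (Kq r u (j - 1 - d) - Kq r u j)))
      = ((d : ℚ) * ccoef r u d * ffq j (d + 1)) *
        (if d ≤ h then cf (h - d) (expPS (Kq r u (j - 1 - d) - Kq r u j)) else 0) := by
    intro d _
    rw [coeff_smul, smul_eq_mul, coeff_X_pow_mul']
    by_cases hd0 : d = 0
    · subst hd0
      rw [Nat.cast_zero, zero_mul, zero_mul, zero_mul, zero_mul]
    · by_cases hdh : d ≤ h
      · rw [if_pos (by omega : d - 1 ≤ h - 1), if_pos hdh]
        have hix : h - 1 - (d - 1) = h - d := by omega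
        rw [hix]
      · rw [if_neg (by omega), if_neg hdh]
  rw [Finset.sum_congr rfl hterm] at hd
  rw [sum_if_glue _ _ h j (fun d hd' => by rw [ffq_zero (by omega : j ≤ d)]; ring)] at hd
  have hcast : ((h - 1 : ℕ) : ℚ) + 1 = (h : ℚ) := by
    have hn : (h - 1 + 1 : ℕ) = h := by omega
    have hq := congrArg (fun n : ℕ => (n : ℚ)) hn
    push_cast at hq
    linarith
  rw [hcast] at hd
  rw [Lq, mul_comm, hd]
end Aux3

namespace PolyAux
open Finset Polynomial
open Aux Aux2 Aux3

local notation "cf" => PowerSeries.coeff (R := ℚ)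

def Agrees (N : ℕ) (f : ℕ → ℚ) (Dg : ℕ) : Prop :=
  ∃ p : Polynomial ℚ, p.degree ≤ (Dg : ℕ) ∧ ∀ j : ℕ, N ≤ j → p.eval (j : ℚ) = f j

lemma Agrees.congr {N D : ℕ} {f g : ℕ → ℚ} (h : Agrees N f D) (hfg : ∀ j, N ≤ j → f j = g j) :
    Agrees N g D := by
  obtain ⟨p, h1, h2⟩ := h
  exact ⟨p, h1, fun j hj => (h2 j hj).trans (hfg j hj)⟩

lemma Agrees.const (N : ℕ) (c : ℚ) (D : ℕ) : Agrees N (fun _ => c) D := by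
  refine ⟨Polynomial.C c, le_trans degree_C_le ?_, fun j _ => eval_C⟩
  exact_mod_cast Nat.zero_le D

lemma Agrees.mul {N D1 D2 : ℕ} {f g : ℕ → ℚ} (h1 : Agrees N f D1) (h2 : Agrees N g D2) :
    Agrees N (fun j => f j * g j) (D1 + D2) := by
  obtain ⟨p, hp1, hp2⟩ := h1
  obtain ⟨q, hq1, hq2⟩ := h2
  refine ⟨p * q, le_trans (degree_mul_le _ _) ?_, fun j hj => by
    rw [eval_mul, hp2 j hj, hq2 j hj]⟩
  rw [Nat.cast_add]
  exact add_le_add hp1 hq1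

lemma Agrees.smul {N D : ℕ} {f : ℕ → ℚ} (c : ℚ) (h : Agrees N f D) :
    Agrees N (fun j => c * f j) D := by
  obtain ⟨p, hp1, hp2⟩ := h
  refine ⟨Polynomial.C c * p, ?_, fun j hj => by rw [eval_mul, eval_C, hp2 j hj]⟩
  refine le_trans (degree_mul_le _ _) (le_trans (add_le_add degree_C_le hp1) ?_)
  rw [zero_add]

lemma Agrees.sum {ι : Type*} {N D : ℕ} (s : Finset ι) (F : ι → ℕ → ℚ)
    (h : ∀ i ∈ s, Agrees N (F i) D) :
    Agrees N (fun j => ∑ i ∈ s, F i j) D := by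
  classical
  induction s using Finset.induction_on with
  | empty => exact ⟨0, by simp, fun j _ => by simp⟩
  | @insert a s hni ih =>
    obtain ⟨p, hp1, hp2⟩ := h a (mem_insert_self a s)
    obtain ⟨q, hq1, hq2⟩ := ih (fun i hi => h i (mem_insert_of_mem hi))
    refine ⟨p + q, le_trans (degree_add_le _ _) (max_le hp1 hq1), fun j hj => ?_⟩
    rw [eval_add, hp2 j hj, hq2 j hj]
    simp only [Finset.sum_insert hni]

lemma comp_sub_degree (p : Polynomial ℚ) (c : ℚ) (D : ℕ) (h : p.degree ≤ ((D + 1 : ℕ) : ℕ)) :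
    (p.comp (Polynomial.X - Polynomial.C c) - p).degree ≤ (D : ℕ) := by
  set q := p.comp (Polynomial.X - Polynomial.C c) - p with hq
  by_cases hq0 : q = 0
  · rw [hq0, degree_zero]
    exact bot_le
  · have hp : p ≠ 0 := by
      intro h0
      apply hq0
      rw [hq, h0, zero_comp, sub_zero]
    have hnd : (p.comp (Polynomial.X - Polynomial.C c)).natDegree = p.natDegree := by
      rw [natDegree_comp, natDegree_X_sub_C, mul_one]
    have hlc : (p.comp (Polynomial.X - Polynomial.C c)).leadingCoeff = p.leadingCoeff := by
      rw [leadingCoeff_comp (by rw [natDegree_X_sub_C]; omega), leadingCoeff_X_sub_C,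
        one_pow, mul_one]
    have hcomp0 : p.comp (Polynomial.X - Polynomial.C c) ≠ 0 := by
      intro h0
      apply hp
      rw [← leadingCoeff_eq_zero, ← hlc, h0, leadingCoeff_zero]
    have hdeg : (p.comp (Polynomial.X - Polynomial.C c)).degree = p.degree := by
      rw [degree_eq_natDegree hcomp0, degree_eq_natDegree hp, hnd]
    have hlt : q.degree < p.degree := by
      rw [hq, ← hdeg]
      exact degree_sub_lt hdeg hcomp0 hlc
    have hlt2 : q.degree < ((D + 1 : ℕ) : WithBot ℕ) := lt_of_lt_of_le hlt h
    have hnat : q.natDegree < D + 1 := (natDegree_lt_iff_degree_lt hq0).mpr hlt2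
    exact degree_le_of_natDegree_le (by omega)

lemma Agrees.shift_sub {f : ℕ → ℚ} {D : ℕ} (h : Agrees 0 f (D + 1)) (d : ℕ) :
    Agrees (d + 1) (fun j => f (j - 1 - d) - f j) D := by
  obtain ⟨p, hp1, hp2⟩ := h
  refine ⟨p.comp (Polynomial.X - Polynomial.C ((d : ℚ) + 1)) - p,
    comp_sub_degree p _ D hp1, fun j hj => ?_⟩
  rw [eval_sub, eval_comp, eval_sub, eval_X, eval_C]
  have hcast : ((j : ℚ) - ((d : ℚ) + 1)) = (((j - 1 - d : ℕ)) : ℚ) := by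
    have hn : (j - 1 - d) + (d + 1) = j := by omega
    have hq := congrArg (fun n : ℕ => (n : ℚ)) hn
    push_cast at hq
    linarith
  rw [hcast, hp2 _ (Nat.zero_le _), hp2 _ (Nat.zero_le _)]

noncomputable def ffp (k : ℕ) : Polynomial ℚ :=
  ∏ i ∈ range k, (Polynomial.X - Polynomial.C (i : ℚ))

lemma ffp_eval (j k : ℕ) : (ffp k).eval (j : ℚ) = ffq j k := by
  rw [ffp, eval_prod, ffq]
  apply Finset.prod_congr rfl
  intro i _
  rw [eval_sub, eval_X, eval_C]

lemma ffp_degree (k : ℕ) : (ffp k).degree ≤ (k : ℕ) := by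
  apply degree_le_of_natDegree_le
  refine le_trans (natDegree_prod_le _ _) ?_
  have : ∀ i ∈ range k, (Polynomial.X - Polynomial.C ((i : ℚ))).natDegree = 1 := by
    intro i _
    exact natDegree_X_sub_C _
  rw [Finset.sum_congr rfl this, Finset.sum_const, card_range, smul_eq_mul, mul_one]

lemma Agrees.ffq_mul {g : ℕ → ℚ} {D d : ℕ} (h : Agrees (d + 1) g D) :
    Agrees 0 (fun j => ffq j (d + 1) * g j) (d + 1 + D) := by
  obtain ⟨p, hp1, hp2⟩ := h
  refine ⟨ffp (d + 1) * p, ?_, ?_⟩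
  · refine le_trans (degree_mul_le _ _) ?_
    rw [Nat.cast_add]
    exact add_le_add (ffp_degree (d + 1)) hp1
  · intro j _
    rw [eval_mul, ffp_eval]
    by_cases hj : d + 1 ≤ j
    · rw [hp2 j hj]
    · have h0 : ffq j (d + 1) = 0 := ffq_zero (by omega)
      simp only [h0, zero_mul]

theorem Lq_poly (r : ℕ) (u : ℕ → ℚ) (hr : 0 < r) :
    ∀ h : ℕ, Agrees 0 (fun j => Lq r u h j) (h + 1) := by
  intro h
  induction h using Nat.strong_induction_on with
  | _ h IH =>
    rcases h with _ | h
    · refine ⟨0, by simp [degree_zero], fun j _ => ?_⟩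
      simp only [eval_zero, Lq]
      rw [PowerSeries.coeff_zero_eq_constantCoeff_apply, const_Kq]
    · -- step A
      have stepA : ∀ d m e : ℕ, e ≤ h →
          Agrees (d + 1) (fun j => cf e ((Kq r u (j - 1 - d) - Kq r u j) ^ m)) e := by
        intro d m
        induction m with
        | zero =>
          intro e he
          refine ⟨Polynomial.C (if e = 0 then (1 : ℚ) else 0),
            le_trans degree_C_le (by exact_mod_cast Nat.zero_le e), fun j _ => ?_⟩
          simp only [eval_C, pow_zero, PowerSeries.coeff_one]
        | succ m ihm =>
          intro e he
          have hexp : ∀ j : ℕ, cf e ((Kq r u (j - 1 - d) - Kq r u j) ^ (m + 1))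
              = ∑ p ∈ antidiagonal e, (Lq r u p.1 (j - 1 - d) - Lq r u p.1 j) *
                  cf p.2 ((Kq r u (j - 1 - d) - Kq r u j) ^ m) := by
            intro j
            rw [pow_succ', PowerSeries.coeff_mul]
            apply Finset.sum_congr rfl
            intro p _
            rw [map_sub]
            rfl
          have hAg : Agrees (d + 1) (fun j => ∑ p ∈ antidiagonal e,
              (Lq r u p.1 (j - 1 - d) - Lq r u p.1 j) *
                cf p.2 ((Kq r u (j - 1 - d) - Kq r u j) ^ m)) e := by
            apply Agrees.sum
            intro p hp
            rw [Finset.HasAntidiagonal.mem_antidiagonal] at hp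
            have h1 : Agrees (d + 1) (fun j => Lq r u p.1 (j - 1 - d) - Lq r u p.1 j) p.1 :=
              Agrees.shift_sub (IH p.1 (by omega)) d
            have h2 := ihm p.2 (by omega)
            have h3 := h1.mul h2
            rw [hp] at h3
            exact h3
          exact hAg.congr (fun j _ => (hexp j).symm)
      -- step B
      have stepB : ∀ d : ℕ, 1 ≤ d → d ≤ h + 1 →
          Agrees (d + 1) (fun j => cf (h + 1 - d)
            (expPS (Kq r u (j - 1 - d) - Kq r u j))) (h + 1 - d) := by
        intro d hd1 hd2
        have hexp : ∀ j : ℕ, cf (h + 1 - d) (expPS (Kq r u (j - 1 - d) - Kq r u j))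
            = ∑ m ∈ range (h + 1 - d + 1), (m.factorial : ℚ)⁻¹ *
                cf (h + 1 - d) ((Kq r u (j - 1 - d) - Kq r u j) ^ m) :=
          fun j => coeff_expPS _ _
        have hAg : Agrees (d + 1) (fun j => ∑ m ∈ range (h + 1 - d + 1), (m.factorial : ℚ)⁻¹ *
            cf (h + 1 - d) ((Kq r u (j - 1 - d) - Kq r u j) ^ m)) (h + 1 - d) := by
          apply Agrees.sum
          intro m _
          exact Agrees.smul _ (stepA d m (h + 1 - d) (by omega))
        exact hAg.congr (fun j _ => (hexp j).symm)
      -- assemble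
      have hfinal : ∀ j : ℕ, Lq r u (h + 1) j = ((h + 1 : ℕ) : ℚ)⁻¹ *
          ∑ d ∈ range (h + 1 + 1), (d : ℚ) * ccoef r u d *
            (ffq j (d + 1) * cf (h + 1 - d) (expPS (Kq r u (j - 1 - d) - Kq r u j))) := by
        intro j
        have hrq := rq r u hr (h + 1) j (by omega)
        have hne : (((h + 1 : ℕ)) : ℚ) ≠ 0 := by positivity
        have : Lq r u (h + 1) j = ((h + 1 : ℕ) : ℚ)⁻¹ * (((h + 1 : ℕ) : ℚ) * Lq r u (h + 1) j) := by
          field_simp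
        rw [this, hrq]
        congr 1
        apply Finset.sum_congr rfl
        intro d _
        ring
      have hAg : Agrees 0 (fun j => ((h + 1 : ℕ) : ℚ)⁻¹ *
          ∑ d ∈ range (h + 1 + 1), (d : ℚ) * ccoef r u d *
            (ffq j (d + 1) * cf (h + 1 - d) (expPS (Kq r u (j - 1 - d) - Kq r u j)))) (h + 1 + 1) := by
        apply Agrees.smul
        apply Agrees.sum
        intro d hd
        rw [mem_range] at hd
        rcases Nat.eq_zero_or_pos d with hd0 | hd0
        · subst hd0
          refine ⟨0, by simp [degree_zero], fun j _ => ?_⟩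
          simp only [eval_zero, Nat.cast_zero, zero_mul]
        · have hB := stepB d hd0 (by omega)
          have hmul := hB.ffq_mul
          have hD : d + 1 + (h + 1 - d) = h + 1 + 1 := by omega
          rw [hD] at hmul
          exact Agrees.smul _ hmul
      exact hAg.congr (fun j _ => (hfinal j).symm)

end PolyAux


/-- For a fixed positive integer `r` and an arbitrary sequence of rationals `u`: for every
`h`, the coefficient `L_h(j)` of `t^h` in `log (1 + ∑_{s=1}^{j} a_s(r, j) t^s)` is given, for
all positive integers `j`, by a polynomial in `j` of degree at most `h + 1`; equivalently,
the coefficient of `j^k` in `L_h(j)` vanishes for all `k ≥ h + 2`. -/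
theorem logCoeff_polynomial_of_degree_le (r : ℕ) (hr : 0 < r) (u : ℕ → ℚ) (h : ℕ) :
    ∃ q : Polynomial ℚ, q.degree ≤ (h + 1 : ℕ) ∧
      ∀ j : ℕ, 0 < j → q.eval (j : ℚ) = LCoeff r u h j := by
  obtain ⟨q, hdeg, hev⟩ := PolyAux.Lq_poly r u hr h
  refine ⟨q, hdeg, fun j hj => ?_⟩
  rw [hev j (Nat.zero_le j), Aux3.LCoeff_eq_Lq r u hr hj h]
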